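/- Let D = conv{0, e₁, e₂, e₃, e₁+e₃, e₂+e₃} ⊆ ℝ³ be the triangular prism over the triangle conv{0, e₁, e₂}, and let Λ' be a full-rank lattice in ℝ³ containing ℤ³ such that for any two distinct vectors s, t ∈ Λ' the interiors of D + s and D + t are disjoint. Then Λ' = ℤ³. -/

import Mathlib

open Pointwise MeasureTheory

/-- The standard basis vector `eᵢ` of `ℝ³`. -/
noncomputable def stdVec (i : Fin 3) : EuclideanSpace ℝ (Fin 3) :=
  EuclideanSpace.single i (1 : ℝ)

/-- The triangular prism `conv {0, e₁, e₂, e₃, e₁+e₃, e₂+e₃} ⊆ ℝ³` over the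
triangle `conv {0, e₁, e₂}`. -/
noncomputable def stdPrism : Set (EuclideanSpace ℝ (Fin 3)) :=
  convexHull ℝ {0, stdVec 0, stdVec 1, stdVec 2, stdVec 0 + stdVec 2, stdVec 1 + stdVec 2}

/-- The standard integer lattice `ℤ³ ⊆ ℝ³`, i.e. the `ℤ`-span of the standard basis. -/
noncomputable def intLattice : Submodule ℤ (EuclideanSpace ℝ (Fin 3)) :=
  Submodule.span ℤ (Set.range stdVec)

/- ### Auxiliary material -/

noncomputable def triple (a b c : ℝ) : EuclideanSpace ℝ (Fin 3) :=
  a • stdVec 0 + b • stdVec 1 + c • stdVec 2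

lemma triple_apply0 (a b c : ℝ) : triple a b c 0 = a := by
  simp [triple, stdVec, EuclideanSpace.single_apply]

lemma triple_apply1 (a b c : ℝ) : triple a b c 1 = b := by
  simp [triple, stdVec, EuclideanSpace.single_apply]

lemma triple_apply2 (a b c : ℝ) : triple a b c 2 = c := by
  simp [triple, stdVec, EuclideanSpace.single_apply]

lemma eq_triple (x : EuclideanSpace ℝ (Fin 3)) : x = triple (x 0) (x 1) (x 2) := by
  ext j; fin_cases j <;> simp [triple, stdVec, EuclideanSpace.single_apply]

lemma add_triple (x : EuclideanSpace ℝ (Fin 3)) (a b c : ℝ) :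
    x + triple a b c = triple (x 0 + a) (x 1 + b) (x 2 + c) := by
  ext j; fin_cases j <;> simp [triple, stdVec, EuclideanSpace.single_apply]

lemma triple_congr {a b c a' b' c' : ℝ} (h1 : a = a') (h2 : b = b') (h3 : c = c') :
    triple a b c = triple a' b' c' := by rw [h1, h2, h3]

lemma triple_int_mem (n m k : ℤ) : triple (n : ℝ) (m : ℝ) (k : ℝ) ∈ intLattice := by
  have h0 : stdVec 0 ∈ intLattice := Submodule.subset_span ⟨0, rfl⟩
  have h1 : stdVec 1 ∈ intLattice := Submodule.subset_span ⟨1, rfl⟩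
  have h2 : stdVec 2 ∈ intLattice := Submodule.subset_span ⟨2, rfl⟩
  have : triple (n : ℝ) (m : ℝ) (k : ℝ) = n • stdVec 0 + m • stdVec 1 + k • stdVec 2 := by
    simp [triple, Int.cast_smul_eq_zsmul]
  rw [this]
  exact add_mem (add_mem (Submodule.smul_mem _ n h0) (Submodule.smul_mem _ m h1))
    (Submodule.smul_mem _ k h2)

lemma mem_prism {a b c : ℝ} (ha : 0 ≤ a) (hb : 0 ≤ b) (hab : a + b ≤ 1)
    (hc0 : 0 ≤ c) (hc1 : c ≤ 1) : triple a b c ∈ stdPrism := by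
  have hconv : Convex ℝ stdPrism := convex_convexHull ℝ _
  set w : Fin 6 → ℝ := ![(1-c)*(1-a-b), (1-c)*a, (1-c)*b, c*(1-a-b), c*a, c*b] with hw
  set z : Fin 6 → EuclideanSpace ℝ (Fin 3) :=
    ![0, stdVec 0, stdVec 1, stdVec 2, stdVec 0 + stdVec 2, stdVec 1 + stdVec 2] with hz
  have hmem : ∀ i ∈ Finset.univ, z i ∈ stdPrism := by
    intro i _
    fin_cases i
    · exact subset_convexHull _ _ (by left; rfl)
    · exact subset_convexHull _ _ (by right; left; rfl)
    · exact subset_convexHull _ _ (by right; right; left; rfl)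
    · exact subset_convexHull _ _ (by right; right; right; left; rfl)
    · exact subset_convexHull _ _ (by right; right; right; right; left; rfl)
    · exact subset_convexHull _ _ (by right; right; right; right; right; rfl)
  have h1 : (0:ℝ) ≤ 1 - c := by linarith
  have h2 : (0:ℝ) ≤ 1 - a - b := by linarith
  have hwnn : ∀ i ∈ Finset.univ, 0 ≤ w i := by
    intro i _
    fin_cases i
    · show (0:ℝ) ≤ (1-c)*(1-a-b); positivity
    · show (0:ℝ) ≤ (1-c)*a; positivity
    · show (0:ℝ) ≤ (1-c)*b; positivity
    · show (0:ℝ) ≤ c*(1-a-b); positivity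
    · show (0:ℝ) ≤ c*a; positivity
    · show (0:ℝ) ≤ c*b; positivity
  have hws : ∑ i ∈ Finset.univ, w i = 1 := by
    rw [Fin.sum_univ_six]
    show (1-c)*(1-a-b) + (1-c)*a + (1-c)*b + c*(1-a-b) + c*a + c*b = 1
    ring
  have hsum := hconv.sum_mem hwnn hws hmem
  rw [Fin.sum_univ_six] at hsum
  have heq : w 0 • z 0 + w 1 • z 1 + w 2 • z 2 + w 3 • z 3 + w 4 • z 4 + w 5 • z 5
      = triple a b c := by
    show ((1-c)*(1-a-b)) • (0 : EuclideanSpace ℝ (Fin 3)) + ((1-c)*a) • stdVec 0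
      + ((1-c)*b) • stdVec 1 + (c*(1-a-b)) • stdVec 2 + (c*a) • (stdVec 0 + stdVec 2)
      + (c*b) • (stdVec 1 + stdVec 2) = triple a b c
    simp only [triple]
    module
  rwa [heq] at hsum

def openTri : Set (EuclideanSpace ℝ (Fin 3)) :=
  {x | 0 < x 0 ∧ 0 < x 1 ∧ x 0 + x 1 < 1 ∧ 0 < x 2 ∧ x 2 < 1}

lemma openTri_open : IsOpen openTri := by
  have c0 : Continuous (fun x : EuclideanSpace ℝ (Fin 3) => x 0) := PiLp.continuous_apply 2 _ 0
  have c1 : Continuous (fun x : EuclideanSpace ℝ (Fin 3) => x 1) := PiLp.continuous_apply 2 _ 1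
  have c2 : Continuous (fun x : EuclideanSpace ℝ (Fin 3) => x 2) := PiLp.continuous_apply 2 _ 2
  exact (isOpen_lt continuous_const c0).inter <| (isOpen_lt continuous_const c1).inter <|
    (isOpen_lt (c0.add c1) continuous_const).inter <|
    (isOpen_lt continuous_const c2).inter (isOpen_lt c2 continuous_const)

lemma openTri_sub : openTri ⊆ stdPrism := by
  rintro x ⟨h0, h1, h01, h2, h2'⟩
  rw [eq_triple x]
  exact mem_prism h0.le h1.le h01.le h2.le h2'.le

lemma triple_mem_openTri {a b c : ℝ} (h1 : 0 < a) (h2 : 0 < b) (h3 : a + b < 1)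
    (h4 : 0 < c) (h5 : c < 1) : triple a b c ∈ openTri := by
  refine ⟨?_, ?_, ?_, ?_, ?_⟩ <;>
    simp only [triple_apply0, triple_apply1, triple_apply2] <;> assumption

lemma mem_int_vadd (a q : EuclideanSpace ℝ (Fin 3)) (hq : q ∈ openTri) :
    a + q ∈ interior (a +ᵥ stdPrism) := by
  have h1 : a +ᵥ openTri ⊆ a +ᵥ stdPrism := Set.vadd_set_mono openTri_sub
  have h2 : IsOpen (a +ᵥ openTri) := openTri_open.vadd a
  exact interior_maximal h1 h2 (Set.vadd_mem_vadd_set_iff.mpr hq)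

/-- If `Λ'` is a full-rank lattice in `ℝ³` containing `ℤ³` such that the translates of the
triangular prism `D` by the vectors of `Λ'` have pairwise disjoint interiors,
then `Λ' = ℤ³`. -/
theorem stmt_12 (Λ' : Submodule ℤ (EuclideanSpace ℝ (Fin 3)))
    [DiscreteTopology Λ'] [IsZLattice ℝ Λ']
    (hle : intLattice ≤ Λ')
    (h : ∀ s ∈ Λ', ∀ t ∈ Λ', s ≠ t →
      Disjoint (interior (s +ᵥ stdPrism)) (interior (t +ᵥ stdPrism))) :
    Λ' = intLattice := by
  refine le_antisymm ?_ hle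
  intro v hv
  set n : Fin 3 → ℤ := fun i => ⌊v i⌋ with hn
  set f : Fin 3 → ℝ := fun i => Int.fract (v i) with hf
  have hvi : ∀ i, v i = (n i : ℝ) + f i := fun i => (Int.floor_add_fract (v i)).symm
  have hf0 : 0 ≤ f 0 := Int.fract_nonneg _
  have hf1 : 0 ≤ f 1 := Int.fract_nonneg _
  have hf2 : 0 ≤ f 2 := Int.fract_nonneg _
  have hf0' : f 0 < 1 := Int.fract_lt_one _
  have hf1' : f 1 < 1 := Int.fract_lt_one _
  have hf2' : f 2 < 1 := Int.fract_lt_one _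
  set sV : EuclideanSpace ℝ (Fin 3) := triple ((n 0 : ℝ)) ((n 1 : ℝ)) ((n 2 : ℝ)) with hsV
  have hsmem : sV ∈ Λ' := hle (triple_int_mem (n 0) (n 1) (n 2))
  by_cases hvs : v = sV
  · rw [hvs]; exact triple_int_mem (n 0) (n 1) (n 2)
  · exfalso
    by_cases hcase : f 0 + f 1 < 1
    · -- use sV
      set δ : ℝ := (1 - f 0 - f 1)/4 with hδdef
      have hδ : 0 < δ := by rw [hδdef]; linarith
      set p : EuclideanSpace ℝ (Fin 3) :=
        triple ((n 0 : ℝ) + (f 0 + δ)) ((n 1 : ℝ) + (f 1 + δ)) ((n 2 : ℝ) + (1 + f 2)/2)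
        with hp
      have hp1 : p ∈ interior (sV +ᵥ stdPrism) := by
        have he : p = sV + triple (f 0 + δ) (f 1 + δ) ((1 + f 2)/2) := by
          rw [hp, hsV, add_triple]
          exact triple_congr (by rw [triple_apply0]) (by rw [triple_apply1])
            (by rw [triple_apply2])
        rw [he]
        exact mem_int_vadd _ _ (triple_mem_openTri (by linarith) (by linarith)
          (by rw [hδdef]; linarith) (by linarith) (by linarith))
      have hp2 : p ∈ interior (v +ᵥ stdPrism) := by
        have he : p = v + triple δ δ ((1 - f 2)/2) := by
          rw [hp, add_triple]
          exact triple_congr (by rw [hvi 0]; ring) (by rw [hvi 1]; ring)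
            (by rw [hvi 2]; ring)
        rw [he]
        exact mem_int_vadd _ _ (triple_mem_openTri hδ hδ (by rw [hδdef]; linarith)
          (by linarith) (by linarith))
      exact Set.disjoint_left.1 (h sV hsmem v hv (Ne.symm hvs)) hp1 hp2
    · -- use sV + e₂
      push_neg at hcase
      set s'V : EuclideanSpace ℝ (Fin 3) :=
        triple ((n 0 : ℝ)) ((n 1 : ℝ) + 1) ((n 2 : ℝ)) with hs'V
      have hs'mem : s'V ∈ Λ' := by
        have : s'V = triple ((n 0 : ℤ) : ℝ) (((n 1 + 1 : ℤ)) : ℝ) ((n 2 : ℤ) : ℝ) := by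
          rw [hs'V]; push_cast; rfl
        rw [this]
        exact hle (triple_int_mem (n 0) (n 1 + 1) (n 2))
      have hne : s'V ≠ v := by
        intro heq
        have h1 : s'V 1 = v 1 := by rw [heq]
        rw [hs'V, triple_apply1, hvi 1] at h1
        linarith
      set p : EuclideanSpace ℝ (Fin 3) :=
        triple ((n 0 : ℝ) + (1 + f 0)/2) ((n 1 : ℝ) + 1 + (1 - f 0)/4)
          ((n 2 : ℝ) + (1 + f 2)/2) with hp
      have hp1 : p ∈ interior (s'V +ᵥ stdPrism) := by
        have he : p = s'V + triple ((1 + f 0)/2) ((1 - f 0)/4) ((1 + f 2)/2) := by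
          rw [hp, hs'V, add_triple]
          exact triple_congr (by rw [triple_apply0]) (by rw [triple_apply1])
            (by rw [triple_apply2])
        rw [he]
        exact mem_int_vadd _ _ (triple_mem_openTri (by linarith) (by linarith)
          (by linarith) (by linarith) (by linarith))
      have hp2 : p ∈ interior (v +ᵥ stdPrism) := by
        have he : p = v + triple ((1 - f 0)/2) (1 + (1 - f 0)/4 - f 1) ((1 - f 2)/2) := by
          rw [hp, add_triple]
          exact triple_congr (by rw [hvi 0]; ring) (by rw [hvi 1]; ring)
            (by rw [hvi 2]; ring)
        rw [he]
        exact mem_int_vadd _ _ (triple_mem_openTri (by linarith) (by linarith)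
          (by linarith) (by linarith) (by linarith))
      exact Set.disjoint_left.1 (h s'V hs'mem v hv hne) hp1 hp2
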